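/- Corollary (strong QI implies unique stationarity): let 𝒦 ⊆ ℝ^{mN×pN} be a linear subspace that is strongly quadratically invariant with respect to G and such that K·G is nilpotent for every K ∈ 𝒦. Then the problem min_{K ∈ 𝒦} J(K) is uniquely stationary: every K̄ ∈ 𝒦 with ∇J(K̄) ∈ 𝒦^⊥ satisfies J(K̄) ≤ J(K) for all K ∈ 𝒦. -/

import Mathlib

open Matrix

noncomputable section

/-- Squared Frobenius norm of a real matrix. -/
def frobSq {a b : Type*} [Fintype a] [Fintype b] (A : Matrix a b ℝ) : ℝ :=
  ∑ i, ∑ j, (A i j) ^ 2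

/-- Squared Euclidean norm of a real vector. -/
def vecSq {a : Type*} [Fintype a] (v : a → ℝ) : ℝ :=
  ∑ i, (v i) ^ 2

/-- The finite-horizon LQG cost `J(K)` of the paper, written in terms of the
square roots `Msq = M^{1/2}`, `Swsq = Σw^{1/2}`, `Rsq = R^{1/2}`, `Svsq = Σv^{1/2}`. -/
def Jcost {nn mm pp : ℕ}
    (P11 : Matrix (Fin nn) (Fin nn) ℝ) (P12 : Matrix (Fin nn) (Fin mm) ℝ)
    (C : Matrix (Fin pp) (Fin nn) ℝ)
    (Msq Swsq : Matrix (Fin nn) (Fin nn) ℝ)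
    (Rsq : Matrix (Fin mm) (Fin mm) ℝ) (Svsq : Matrix (Fin pp) (Fin pp) ℝ)
    (μ : Fin nn → ℝ) (K : Matrix (Fin mm) (Fin pp) ℝ) : ℝ :=
  frobSq (Msq * (1 - P12 * K * C)⁻¹ * P11 * Swsq)
  + frobSq (Msq * P12 * K * (1 - C * P12 * K)⁻¹ * Svsq)
  + frobSq (Rsq * K * (1 - C * P12 * K)⁻¹ * C * P11 * Swsq)
  + frobSq (Rsq * K * (1 - C * P12 * K)⁻¹ * Svsq)
  + vecSq ((Msq * (1 - P12 * K * C)⁻¹ * P11).mulVec μ)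
  + vecSq ((Rsq * K * (1 - C * P12 * K)⁻¹ * C * P11).mulVec μ)

/-- The disturbance-feedback cost `J̃(Q)` of the paper, written in terms of the
square roots `Msq = M^{1/2}`, `Swsq = Σw^{1/2}`, `Rsq = R^{1/2}`, `Svsq = Σv^{1/2}`. -/
def Jtilde {nn mm pp : ℕ}
    (P11 : Matrix (Fin nn) (Fin nn) ℝ) (P12 : Matrix (Fin nn) (Fin mm) ℝ)
    (C : Matrix (Fin pp) (Fin nn) ℝ)
    (Msq Swsq : Matrix (Fin nn) (Fin nn) ℝ)
    (Rsq : Matrix (Fin mm) (Fin mm) ℝ) (Svsq : Matrix (Fin pp) (Fin pp) ℝ)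
    (μ : Fin nn → ℝ) (Q : Matrix (Fin mm) (Fin pp) ℝ) : ℝ :=
  frobSq (Msq * (1 + P12 * Q * C) * P11 * Swsq)
  + frobSq (Msq * P12 * Q * Svsq)
  + frobSq (Rsq * Q * C * P11 * Swsq)
  + frobSq (Rsq * Q * Svsq)
  + vecSq ((Rsq * Q * C * P11).mulVec μ)
  + vecSq ((Msq * (1 + P12 * Q * C) * P11).mulVec μ)

section
open scoped ComplexOrder

/-- The positive semidefinite square root of a positive semidefinite matrix
(the Mathlib definition `Matrix.PosSemidef.sqrt` of December 2024, since removed). -/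
def Matrix.PosSemidef.sqrt {n : Type*} [Fintype n] [DecidableEq n] {𝕜 : Type*} [RCLike 𝕜]
    {A : Matrix n n 𝕜} (hA : A.PosSemidef) : Matrix n n 𝕜 :=
  hA.1.eigenvectorUnitary.1 * diagonal ((↑) ∘ (√·) ∘ hA.1.eigenvalues) *
  (star hA.1.eigenvectorUnitary : Matrix n n 𝕜)

end

end


noncomputable section

def ipF {a b : Type*} [Fintype a] [Fintype b] (A B : Matrix a b ℝ) : ℝ :=
  ∑ i, ∑ j, A i j * B i j
def ipV {a : Type*} [Fintype a] (u v : a → ℝ) : ℝ :=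
  ∑ i, u i * v i
def JlinT {nn mm pp : ℕ}
    (P11 : Matrix (Fin nn) (Fin nn) ℝ) (P12 : Matrix (Fin nn) (Fin mm) ℝ)
    (C : Matrix (Fin pp) (Fin nn) ℝ)
    (Msq Swsq : Matrix (Fin nn) (Fin nn) ℝ)
    (Rsq : Matrix (Fin mm) (Fin mm) ℝ) (Svsq : Matrix (Fin pp) (Fin pp) ℝ)
    (μ : Fin nn → ℝ) (A B : Matrix (Fin mm) (Fin pp) ℝ) : ℝ :=
  2 * ipF (Msq * (1 + P12 * A * C) * P11 * Swsq) (Msq * P12 * B * C * P11 * Swsq)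
  + 2 * ipF (Msq * P12 * A * Svsq) (Msq * P12 * B * Svsq)
  + 2 * ipF (Rsq * A * C * P11 * Swsq) (Rsq * B * C * P11 * Swsq)
  + 2 * ipF (Rsq * A * Svsq) (Rsq * B * Svsq)
  + 2 * ipV ((Rsq * A * C * P11).mulVec μ) ((Rsq * B * C * P11).mulVec μ)
  + 2 * ipV ((Msq * (1 + P12 * A * C) * P11).mulVec μ) ((Msq * P12 * B * C * P11).mulVec μ)
def JquadT {nn mm pp : ℕ}
    (P11 : Matrix (Fin nn) (Fin nn) ℝ) (P12 : Matrix (Fin nn) (Fin mm) ℝ)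
    (C : Matrix (Fin pp) (Fin nn) ℝ)
    (Msq Swsq : Matrix (Fin nn) (Fin nn) ℝ)
    (Rsq : Matrix (Fin mm) (Fin mm) ℝ) (Svsq : Matrix (Fin pp) (Fin pp) ℝ)
    (μ : Fin nn → ℝ) (B : Matrix (Fin mm) (Fin pp) ℝ) : ℝ :=
  frobSq (Msq * P12 * B * C * P11 * Swsq)
  + frobSq (Msq * P12 * B * Svsq)
  + frobSq (Rsq * B * C * P11 * Swsq)
  + frobSq (Rsq * B * Svsq)
  + vecSq ((Rsq * B * C * P11).mulVec μ)
  + vecSq ((Msq * P12 * B * C * P11).mulVec μ)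
end


section
variable {d : Type*} [Fintype d] [DecidableEq d]

lemma nilp_pow_card {X : Matrix d d ℝ} (h : IsNilpotent X) : X ^ (Fintype.card d) = 0 := by
  have h1 := Matrix.isNilpotent_charpoly_sub_pow_of_isNilpotent h
  have h2 : X.charpoly = Polynomial.X ^ (Fintype.card d) := by
    have := h1.eq_zero
    rwa [sub_eq_zero] at this
  have h3 := X.aeval_self_charpoly
  rw [h2] at h3
  simpa using h3

lemma geom_left {X : Matrix d d ℝ} (h : IsNilpotent X) :
    (1 - X) * (∑ k ∈ Finset.range (Fintype.card d), X ^ k) = 1 := by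
  have h0 : X ^ (Fintype.card d) = 0 := nilp_pow_card h
  have h1 := mul_geom_sum X (Fintype.card d)
  rw [h0] at h1
  have h2 : (1 - X) * (∑ k ∈ Finset.range (Fintype.card d), X ^ k)
      = -((X - 1) * ∑ k ∈ Finset.range (Fintype.card d), X ^ k) := by noncomm_ring
  rw [h2, h1]; simp

lemma geom_right {X : Matrix d d ℝ} (h : IsNilpotent X) :
    (∑ k ∈ Finset.range (Fintype.card d), X ^ k) * (1 - X) = 1 := by
  have h0 : X ^ (Fintype.card d) = 0 := nilp_pow_card h
  have h1 := geom_sum_mul X (Fintype.card d)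
  rw [h0] at h1
  have h2 : (∑ k ∈ Finset.range (Fintype.card d), X ^ k) * (1 - X)
      = -((∑ k ∈ Finset.range (Fintype.card d), X ^ k) * (X - 1)) := by noncomm_ring
  rw [h2, h1]; simp

lemma inv_one_sub_eq_geom {X : Matrix d d ℝ} (h : IsNilpotent X) :
    (1 - X)⁻¹ = ∑ k ∈ Finset.range (Fintype.card d), X ^ k :=
  Matrix.inv_eq_right_inv (geom_left h)

lemma one_sub_mul_inv {X : Matrix d d ℝ} (h : IsNilpotent X) : (1 - X) * (1 - X)⁻¹ = 1 := by
  rw [inv_one_sub_eq_geom h]; exact geom_left h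

lemma inv_mul_one_sub {X : Matrix d d ℝ} (h : IsNilpotent X) : (1 - X)⁻¹ * (1 - X) = 1 := by
  rw [inv_one_sub_eq_geom h]; exact geom_right h

lemma swap_pow {a b : Type*} [Fintype a] [Fintype b] [DecidableEq a] [DecidableEq b]
    (A : Matrix a b ℝ) (B : Matrix b a ℝ) (k : ℕ) :
    (B * A) ^ (k + 1) = B * (A * B) ^ k * A := by
  induction k with
  | zero => simp [pow_succ, Matrix.mul_assoc]
  | succ n ih => rw [pow_succ, ih, pow_succ]; simp [Matrix.mul_assoc]

lemma isNilpotent_swap {a b : Type*} [Fintype a] [Fintype b] [DecidableEq a] [DecidableEq b]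
    {A : Matrix a b ℝ} {B : Matrix b a ℝ} (h : IsNilpotent (A * B)) : IsNilpotent (B * A) := by
  obtain ⟨r, hr⟩ := h
  exact ⟨r + 1, by rw [swap_pow, hr]; simp⟩
end

section
variable {a b : Type*} [Fintype a] [Fintype b]

lemma frobSq_add (A B : Matrix a b ℝ) :
    frobSq (A + B) = frobSq A + 2 * ipF A B + frobSq B := by
  unfold frobSq ipF
  simp_rw [Matrix.add_apply, add_sq, Finset.sum_add_distrib, Finset.mul_sum, mul_assoc]

lemma vecSq_add (u v : a → ℝ) :
    vecSq (u + v) = vecSq u + 2 * ipV u v + vecSq v := by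
  unfold vecSq ipV
  simp_rw [Pi.add_apply, add_sq, Finset.sum_add_distrib, Finset.mul_sum, mul_assoc]

lemma ipF_smul_right (A : Matrix a b ℝ) (t : ℝ) (B : Matrix a b ℝ) :
    ipF A (t • B) = t * ipF A B := by
  unfold ipF
  rw [Finset.mul_sum]
  refine Finset.sum_congr rfl fun i _ => ?_
  rw [Finset.mul_sum]
  refine Finset.sum_congr rfl fun j _ => ?_
  simp [Matrix.smul_apply]; ring

lemma ipV_smul_right (u : a → ℝ) (t : ℝ) (v : a → ℝ) :
    ipV u (t • v) = t * ipV u v := by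
  unfold ipV
  rw [Finset.mul_sum]
  refine Finset.sum_congr rfl fun i _ => ?_
  simp [Pi.smul_apply]; ring

lemma frobSq_smul (t : ℝ) (A : Matrix a b ℝ) : frobSq (t • A) = t ^ 2 * frobSq A := by
  unfold frobSq
  simp_rw [Matrix.smul_apply, smul_eq_mul, mul_pow, Finset.mul_sum]

lemma vecSq_smul (t : ℝ) (v : a → ℝ) : vecSq (t • v) = t ^ 2 * vecSq v := by
  unfold vecSq
  simp_rw [Pi.smul_apply, smul_eq_mul, mul_pow, Finset.mul_sum]

lemma frobSq_nonneg (A : Matrix a b ℝ) : 0 ≤ frobSq A := by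
  unfold frobSq; positivity

lemma vecSq_nonneg (v : a → ℝ) : 0 ≤ vecSq v := by
  unfold vecSq; positivity
end

section JT
variable {nn mm pp : ℕ}
    (P11 : Matrix (Fin nn) (Fin nn) ℝ) (P12 : Matrix (Fin nn) (Fin mm) ℝ)
    (C : Matrix (Fin pp) (Fin nn) ℝ)
    (Msq Swsq : Matrix (Fin nn) (Fin nn) ℝ)
    (Rsq : Matrix (Fin mm) (Fin mm) ℝ) (Svsq : Matrix (Fin pp) (Fin pp) ℝ)
    (μ : Fin nn → ℝ)

lemma Jtilde_decomp (A B : Matrix (Fin mm) (Fin pp) ℝ) :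
    Jtilde P11 P12 C Msq Swsq Rsq Svsq μ (A + B)
      = Jtilde P11 P12 C Msq Swsq Rsq Svsq μ A
        + JlinT P11 P12 C Msq Swsq Rsq Svsq μ A B
        + JquadT P11 P12 C Msq Swsq Rsq Svsq μ B := by
  unfold Jtilde JlinT JquadT
  have e1 : Msq * (1 + P12 * (A + B) * C) * P11 * Swsq
      = Msq * (1 + P12 * A * C) * P11 * Swsq + Msq * P12 * B * C * P11 * Swsq := by
    simp only [Matrix.mul_add, Matrix.add_mul, Matrix.mul_one, Matrix.one_mul, Matrix.mul_assoc]
    abel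
  have e2 : Msq * P12 * (A + B) * Svsq = Msq * P12 * A * Svsq + Msq * P12 * B * Svsq := by
    simp only [Matrix.mul_add, Matrix.add_mul, Matrix.mul_assoc]
  have e3 : Rsq * (A + B) * C * P11 * Swsq
      = Rsq * A * C * P11 * Swsq + Rsq * B * C * P11 * Swsq := by
    simp only [Matrix.mul_add, Matrix.add_mul, Matrix.mul_assoc]
  have e4 : Rsq * (A + B) * Svsq = Rsq * A * Svsq + Rsq * B * Svsq := by
    simp only [Matrix.mul_add, Matrix.add_mul, Matrix.mul_assoc]
  have e5 : (Rsq * (A + B) * C * P11).mulVec μ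
      = (Rsq * A * C * P11).mulVec μ + (Rsq * B * C * P11).mulVec μ := by
    have : Rsq * (A + B) * C * P11 = Rsq * A * C * P11 + Rsq * B * C * P11 := by
      simp only [Matrix.mul_add, Matrix.add_mul, Matrix.mul_assoc]
    rw [this, Matrix.add_mulVec]
  have e6 : (Msq * (1 + P12 * (A + B) * C) * P11).mulVec μ
      = (Msq * (1 + P12 * A * C) * P11).mulVec μ + (Msq * P12 * B * C * P11).mulVec μ := by
    have : Msq * (1 + P12 * (A + B) * C) * P11
        = Msq * (1 + P12 * A * C) * P11 + Msq * P12 * B * C * P11 := by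
      simp only [Matrix.mul_add, Matrix.add_mul, Matrix.mul_one, Matrix.one_mul, Matrix.mul_assoc]
      abel
    rw [this, Matrix.add_mulVec]
  rw [e1, e2, e3, e4, e5, e6, frobSq_add, frobSq_add, frobSq_add, frobSq_add, vecSq_add, vecSq_add]
  ring

lemma JlinT_smul (A : Matrix (Fin mm) (Fin pp) ℝ) (t : ℝ) (B : Matrix (Fin mm) (Fin pp) ℝ) :
    JlinT P11 P12 C Msq Swsq Rsq Svsq μ A (t • B)
      = t * JlinT P11 P12 C Msq Swsq Rsq Svsq μ A B := by
  unfold JlinT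
  simp only [Matrix.mul_smul, Matrix.smul_mul, Matrix.smul_mulVec,
    ipF_smul_right, ipV_smul_right]
  ring

lemma JquadT_smul (t : ℝ) (B : Matrix (Fin mm) (Fin pp) ℝ) :
    JquadT P11 P12 C Msq Swsq Rsq Svsq μ (t • B)
      = t ^ 2 * JquadT P11 P12 C Msq Swsq Rsq Svsq μ B := by
  unfold JquadT
  simp only [Matrix.mul_smul, Matrix.smul_mul, Matrix.smul_mulVec,
    frobSq_smul, vecSq_smul]
  ring

lemma JquadT_nonneg (B : Matrix (Fin mm) (Fin pp) ℝ) :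
    0 ≤ JquadT P11 P12 C Msq Swsq Rsq Svsq μ B := by
  unfold JquadT frobSq vecSq
  positivity

end JT

section ContGen
variable {X : Type*} [TopologicalSpace X] {a b : Type*} [Fintype a] [Fintype b]

lemma cont_ipF_comp {c : Matrix a b ℝ} {f : X → Matrix a b ℝ} (hf : Continuous f) :
    Continuous fun x => ipF c (f x) := by
  unfold ipF
  exact continuous_finset_sum _ fun i _ =>
    continuous_finset_sum _ fun j _ => continuous_const.mul (hf.matrix_elem i j)

lemma cont_ipV_comp {c : a → ℝ} {f : X → a → ℝ} (hf : Continuous f) :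
    Continuous fun x => ipV c (f x) := by
  unfold ipV
  exact continuous_finset_sum _ fun i _ => continuous_const.mul ((continuous_apply i).comp hf)

lemma cont_frobSq_comp {f : X → Matrix a b ℝ} (hf : Continuous f) :
    Continuous fun x => frobSq (f x) := by
  unfold frobSq
  exact continuous_finset_sum _ fun i _ =>
    continuous_finset_sum _ fun j _ => (hf.matrix_elem i j).pow 2

lemma cont_vecSq_comp {f : X → a → ℝ} (hf : Continuous f) :
    Continuous fun x => vecSq (f x) := by
  unfold vecSq
  exact continuous_finset_sum _ fun i _ => ((continuous_apply i).comp hf).pow 2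
end ContGen

section Cont
variable {nn mm pp : ℕ}
    (P11 : Matrix (Fin nn) (Fin nn) ℝ) (P12 : Matrix (Fin nn) (Fin mm) ℝ)
    (C : Matrix (Fin pp) (Fin nn) ℝ)
    (Msq Swsq : Matrix (Fin nn) (Fin nn) ℝ)
    (Rsq : Matrix (Fin mm) (Fin mm) ℝ) (Svsq : Matrix (Fin pp) (Fin pp) ℝ)
    (μ : Fin nn → ℝ) {X : Type*} [TopologicalSpace X]

lemma continuous_JlinT_comp (A : Matrix (Fin mm) (Fin pp) ℝ)
    {S : X → Matrix (Fin mm) (Fin pp) ℝ} (hS : Continuous S) :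
    Continuous fun x => JlinT P11 P12 C Msq Swsq Rsq Svsq μ A (S x) := by
  have c1 : Continuous fun x => Msq * P12 * S x * C * P11 * Swsq :=
    ((((continuous_const.matrix_mul hS).matrix_mul continuous_const).matrix_mul
      continuous_const).matrix_mul continuous_const)
  have c2 : Continuous fun x => Msq * P12 * S x * Svsq :=
    ((continuous_const.matrix_mul hS).matrix_mul continuous_const)
  have c3 : Continuous fun x => Rsq * S x * C * P11 * Swsq :=
    ((((continuous_const.matrix_mul hS).matrix_mul continuous_const).matrix_mul
      continuous_const).matrix_mul continuous_const)
  have c4 : Continuous fun x => Rsq * S x * Svsq :=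
    ((continuous_const.matrix_mul hS).matrix_mul continuous_const)
  have c5 : Continuous fun x => (Rsq * S x * C * P11).mulVec μ :=
    ((((continuous_const.matrix_mul hS).matrix_mul continuous_const).matrix_mul
      continuous_const).matrix_mulVec continuous_const)
  have c6 : Continuous fun x => (Msq * P12 * S x * C * P11).mulVec μ :=
    (((((continuous_const.matrix_mul hS).matrix_mul continuous_const).matrix_mul
      continuous_const)).matrix_mulVec continuous_const)
  unfold JlinT
  exact (((((continuous_const.mul (cont_ipF_comp c1)).add
    (continuous_const.mul (cont_ipF_comp c2))).add
    (continuous_const.mul (cont_ipF_comp c3))).add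
    (continuous_const.mul (cont_ipF_comp c4))).add
    (continuous_const.mul (cont_ipV_comp c5))).add
    (continuous_const.mul (cont_ipV_comp c6))

lemma continuous_JquadT_comp {S : X → Matrix (Fin mm) (Fin pp) ℝ} (hS : Continuous S) :
    Continuous fun x => JquadT P11 P12 C Msq Swsq Rsq Svsq μ (S x) := by
  have c1 : Continuous fun x => Msq * P12 * S x * C * P11 * Swsq :=
    ((((continuous_const.matrix_mul hS).matrix_mul continuous_const).matrix_mul
      continuous_const).matrix_mul continuous_const)
  have c2 : Continuous fun x => Msq * P12 * S x * Svsq :=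
    ((continuous_const.matrix_mul hS).matrix_mul continuous_const)
  have c3 : Continuous fun x => Rsq * S x * C * P11 * Swsq :=
    ((((continuous_const.matrix_mul hS).matrix_mul continuous_const).matrix_mul
      continuous_const).matrix_mul continuous_const)
  have c4 : Continuous fun x => Rsq * S x * Svsq :=
    ((continuous_const.matrix_mul hS).matrix_mul continuous_const)
  have c5 : Continuous fun x => (Rsq * S x * C * P11).mulVec μ :=
    ((((continuous_const.matrix_mul hS).matrix_mul continuous_const).matrix_mul
      continuous_const).matrix_mulVec continuous_const)
  have c6 : Continuous fun x => (Msq * P12 * S x * C * P11).mulVec μ :=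
    (((((continuous_const.matrix_mul hS).matrix_mul continuous_const).matrix_mul
      continuous_const)).matrix_mulVec continuous_const)
  unfold JquadT
  exact (((((cont_frobSq_comp c1).add (cont_frobSq_comp c2)).add
    (cont_frobSq_comp c3)).add (cont_frobSq_comp c4)).add
    (cont_vecSq_comp c5)).add (cont_vecSq_comp c6)
end Cont

lemma deriv_quad {a : ℝ} {φ ψ : ℝ → ℝ} (hφ : Continuous φ) (hψ : Continuous ψ) :
    deriv (fun t => a + t * φ t + t ^ 2 * ψ t) 0 = φ 0 := by
  have h2 : Filter.Tendsto (fun t : ℝ => φ t + t * ψ t)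
      (nhdsWithin 0 {(0 : ℝ)}ᶜ) (nhds (φ 0)) := by
    have hc : Continuous fun t : ℝ => φ t + t * ψ t := hφ.add (continuous_id.mul hψ)
    have h3 : Filter.Tendsto (fun t : ℝ => φ t + t * ψ t)
        (nhdsWithin 0 {(0 : ℝ)}ᶜ) (nhds (φ 0 + 0 * ψ 0)) :=
      (hc.continuousAt (x := 0)).mono_left nhdsWithin_le_nhds
    simpa using h3
  have h : HasDerivAt (fun t => a + t * φ t + t ^ 2 * ψ t) (φ 0) 0 := by
    rw [hasDerivAt_iff_tendsto_slope]
    refine h2.congr' ?_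
    filter_upwards [self_mem_nhdsWithin] with t ht
    have ht' : (t : ℝ) ≠ 0 := ht
    rw [slope_def_field]
    field_simp
    ring
  exact h.deriv

section Key
variable {nn mm pp : ℕ}
    (P11 : Matrix (Fin nn) (Fin nn) ℝ) (P12 : Matrix (Fin nn) (Fin mm) ℝ)
    (C : Matrix (Fin pp) (Fin nn) ℝ)
    (Msq Swsq : Matrix (Fin nn) (Fin nn) ℝ)
    (Rsq : Matrix (Fin mm) (Fin mm) ℝ) (Svsq : Matrix (Fin pp) (Fin pp) ℝ)
    (μ : Fin nn → ℝ)

lemma Jcost_eq_Jtilde (K : Matrix (Fin mm) (Fin pp) ℝ) (hnil : IsNilpotent (C * P12 * K)) :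
    Jcost P11 P12 C Msq Swsq Rsq Svsq μ K
      = Jtilde P11 P12 C Msq Swsq Rsq Svsq μ (K * (1 - C * P12 * K)⁻¹) := by
  have hL : (1 - C * P12 * K) * (1 - C * P12 * K)⁻¹ = 1 := one_sub_mul_inv hnil
  have hR : (1 - C * P12 * K)⁻¹ * (1 - C * P12 * K) = 1 := inv_mul_one_sub hnil
  set E := (1 - C * P12 * K)⁻¹ with hE
  have h1 : E - 1 = C * P12 * K * E := by
    have h1' : E - C * P12 * K * E = 1 := by rw [← hL]; noncomm_ring
    rw [← h1']; abel
  have key : K * E = K + K * (C * P12) * (K * E) := by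
    have h2 : K * (C * P12) * (K * E) = K * (C * P12 * K * E) := by
      simp only [Matrix.mul_assoc]
    rw [h2, ← h1, Matrix.mul_sub, Matrix.mul_one]
    abel
  have hinv2 : (1 - P12 * K * C)⁻¹ = 1 + P12 * (K * E) * C := by
    apply Matrix.inv_eq_right_inv
    have expand : (1 - P12 * K * C) * (1 + P12 * (K * E) * C)
        = 1 + P12 * ((K * E - K) - K * (C * P12) * (K * E)) * C := by
      simp only [Matrix.mul_add, Matrix.add_mul, Matrix.mul_sub, Matrix.sub_mul,
        Matrix.mul_one, Matrix.one_mul, Matrix.mul_assoc]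
      abel
    have z : (K * E - K) - K * (C * P12) * (K * E) = 0 := by
      rw [sub_sub, sub_eq_zero]; exact key
    rw [expand, z, Matrix.mul_zero, Matrix.zero_mul, add_zero]
  unfold Jcost Jtilde
  rw [← hE, hinv2]
  simp only [Matrix.mul_assoc]
  ring

lemma Qmem
    (𝒦 : Submodule ℝ (Matrix (Fin mm) (Fin pp) ℝ))
    (hSQI : ∀ K₁ ∈ 𝒦, ∀ K₂ ∈ 𝒦, K₁ * (C * P12) * K₂ ∈ 𝒦)
    (K : Matrix (Fin mm) (Fin pp) ℝ) (hK : K ∈ 𝒦) (hnil : IsNilpotent (C * P12 * K)) :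
    K * (1 - C * P12 * K)⁻¹ ∈ 𝒦 := by
  rw [inv_one_sub_eq_geom hnil, Matrix.mul_sum]
  have h : ∀ k : ℕ, K * (C * P12 * K) ^ k ∈ 𝒦 := by
    intro k
    induction k with
    | zero => simpa using hK
    | succ n ih =>
        have hmem := hSQI (K * (C * P12 * K) ^ n) ih K hK
        have heq : K * (C * P12 * K) ^ (n + 1) = K * (C * P12 * K) ^ n * (C * P12) * K := by
          rw [pow_succ]; simp only [Matrix.mul_assoc]
        rwa [heq]
  exact Submodule.sum_mem _ fun k _ => h k
end Key

lemma cont_pow_aff {d : Type*} [Fintype d] [DecidableEq d] (A B : Matrix d d ℝ) (k : ℕ) :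
    Continuous fun t : ℝ => (A + t • B) ^ k := by
  have hbase : Continuous fun t : ℝ => A + t • B :=
    continuous_const.add (continuous_id.smul continuous_const)
  induction k with
  | zero => simpa using continuous_const
  | succ n ih =>
      simp_rw [pow_succ]
      exact ih.matrix_mul hbase

set_option maxHeartbeats 1600000 in
lemma main_aux {nn mm pp : ℕ}
    (P11 : Matrix (Fin nn) (Fin nn) ℝ) (P12 : Matrix (Fin nn) (Fin mm) ℝ)
    (C : Matrix (Fin pp) (Fin nn) ℝ)
    (Msq Swsq : Matrix (Fin nn) (Fin nn) ℝ)
    (Rsq : Matrix (Fin mm) (Fin mm) ℝ) (Svsq : Matrix (Fin pp) (Fin pp) ℝ)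
    (μ : Fin nn → ℝ)
    (𝒦 : Submodule ℝ (Matrix (Fin mm) (Fin pp) ℝ))
    (hSQI : ∀ K₁ ∈ 𝒦, ∀ K₂ ∈ 𝒦, K₁ * (C * P12) * K₂ ∈ 𝒦)
    (hnilp : ∀ K ∈ 𝒦, IsNilpotent (K * (C * P12)))
    (Kbar : Matrix (Fin mm) (Fin pp) ℝ) (hKbar : Kbar ∈ 𝒦)
    (hderiv : ∀ D ∈ 𝒦, deriv (fun t : ℝ =>
        Jcost P11 P12 C Msq Swsq Rsq Svsq μ (Kbar + t • D)) 0 = 0)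
    (K : Matrix (Fin mm) (Fin pp) ℝ) (hK : K ∈ 𝒦) :
    Jcost P11 P12 C Msq Swsq Rsq Svsq μ Kbar ≤ Jcost P11 P12 C Msq Swsq Rsq Svsq μ K := by
  have nilswap : ∀ L ∈ 𝒦, IsNilpotent (C * P12 * L) := fun L hL => isNilpotent_swap (hnilp L hL)
  have nilKbar := nilswap Kbar hKbar
  have nilK := nilswap K hK
  set Qb := Kbar * (1 - C * P12 * Kbar)⁻¹ with hQbdef
  set Q' := K * (1 - C * P12 * K)⁻¹ with hQ'def
  have hQb : Qb ∈ 𝒦 := Qmem P12 C 𝒦 hSQI Kbar hKbar nilKbar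
  have hQ' : Q' ∈ 𝒦 := Qmem P12 C 𝒦 hSQI K hK nilK
  set Δ := Q' - Qb with hΔdef
  have hΔ : Δ ∈ 𝒦 := Submodule.sub_mem _ hQ' hQb
  set D := Δ - Kbar * (C * P12) * Δ - Δ * (C * P12) * Kbar
      + Kbar * (C * P12) * (Δ * (C * P12) * Kbar) with hDdef
  have hD : D ∈ 𝒦 := by
    refine Submodule.add_mem _ (Submodule.sub_mem _ (Submodule.sub_mem _ hΔ ?_) ?_) ?_
    · exact hSQI Kbar hKbar Δ hΔ
    · exact hSQI Δ hΔ Kbar hKbar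
    · exact hSQI Kbar hKbar _ (hSQI Δ hΔ Kbar hKbar)
  have hDfac : (1 - Kbar * (C * P12)) * Δ * (1 - C * P12 * Kbar) = D := by
    rw [hDdef]
    simp only [Matrix.sub_mul, Matrix.mul_sub, Matrix.one_mul, Matrix.mul_one, Matrix.mul_assoc]
    abel
  have hL0 : (1 - C * P12 * Kbar) * (1 - C * P12 * Kbar)⁻¹ = 1 := one_sub_mul_inv nilKbar
  have hR0 : (1 - C * P12 * Kbar)⁻¹ * (1 - C * P12 * Kbar) = 1 := inv_mul_one_sub nilKbar
  have hQbK : Qb * (1 - C * P12 * Kbar) = Kbar := by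
    rw [hQbdef, Matrix.mul_assoc, hR0, Matrix.mul_one]
  have h' : Qb - Qb * (C * P12 * Kbar) = Kbar := by
    have h2 := hQbK
    rw [Matrix.mul_sub, Matrix.mul_one] at h2
    exact h2
  have z0 : Qb - Kbar - Qb * (C * P12 * Kbar) = 0 := by
    calc Qb - Kbar - Qb * (C * P12 * Kbar)
        = (Qb - Qb * (C * P12 * Kbar)) - Kbar := by abel
      _ = Kbar - Kbar := by rw [h']
      _ = 0 := sub_self _
  have hA : (1 + Qb * (C * P12)) * (1 - Kbar * (C * P12)) = 1 := by
    have e : (1 + Qb * (C * P12)) * (1 - Kbar * (C * P12))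
        = 1 + (Qb - Kbar - Qb * (C * P12 * Kbar)) * (C * P12) := by
      simp only [Matrix.mul_add, Matrix.add_mul, Matrix.mul_sub, Matrix.sub_mul, Matrix.mul_one,
        Matrix.one_mul, Matrix.mul_assoc]
      abel
    rw [e, z0, Matrix.zero_mul, add_zero]
  set S : ℝ → Matrix (Fin mm) (Fin pp) ℝ :=
    fun t => (1 + Qb * (C * P12)) * D * (1 - C * P12 * (Kbar + t • D))⁻¹ with hSdef
  have hfun : (fun t : ℝ => Jcost P11 P12 C Msq Swsq Rsq Svsq μ (Kbar + t • D))
      = fun t : ℝ => Jtilde P11 P12 C Msq Swsq Rsq Svsq μ Qb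
          + t * JlinT P11 P12 C Msq Swsq Rsq Svsq μ Qb (S t)
          + t ^ 2 * JquadT P11 P12 C Msq Swsq Rsq Svsq μ (S t) := by
    funext t
    have hkt : Kbar + t • D ∈ 𝒦 := Submodule.add_mem _ hKbar (Submodule.smul_mem _ t hD)
    have nilt : IsNilpotent (C * P12 * (Kbar + t • D)) := nilswap _ hkt
    have hLt : (1 - C * P12 * (Kbar + t • D)) * (1 - C * P12 * (Kbar + t • D))⁻¹ = 1 :=
      one_sub_mul_inv nilt
    have hRt : (1 - C * P12 * (Kbar + t • D))⁻¹ * (1 - C * P12 * (Kbar + t • D)) = 1 :=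
      inv_mul_one_sub nilt
    have step1 := Jcost_eq_Jtilde P11 P12 C Msq Swsq Rsq Svsq μ (Kbar + t • D) nilt
    have qeq : (Kbar + t • D) * (1 - C * P12 * (Kbar + t • D))⁻¹ = Qb + t • S t := by
      have e2 : Qb * (1 - C * P12 * (Kbar + t • D))
          = Kbar - t • (Qb * (C * (P12 * D))) := by
        calc Qb * (1 - C * P12 * (Kbar + t • D))
            = Qb * (1 - C * P12 * Kbar) - t • (Qb * (C * (P12 * D))) := by
              simp only [Matrix.mul_add, Matrix.mul_sub, Matrix.mul_one, Matrix.mul_smul,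
                Matrix.mul_assoc]
              abel
          _ = Kbar - t • (Qb * (C * (P12 * D))) := by rw [hQbK]
      have claim : ((Kbar + t • D) * (1 - C * P12 * (Kbar + t • D))⁻¹ - Qb)
          * (1 - C * P12 * (Kbar + t • D)) = t • ((1 + Qb * (C * P12)) * D) := by
        rw [Matrix.sub_mul, Matrix.mul_assoc, hRt, Matrix.mul_one, e2]
        simp only [Matrix.add_mul, Matrix.one_mul, Matrix.mul_assoc, smul_add]
        abel
      have hmul := congrArg (fun Z => Z * (1 - C * P12 * (Kbar + t • D))⁻¹) claim
      rw [Matrix.mul_assoc, hLt, Matrix.mul_one] at hmul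
      have hsm : (t • ((1 + Qb * (C * P12)) * D)) * (1 - C * P12 * (Kbar + t • D))⁻¹
          = t • S t := by
        rw [Matrix.smul_mul]
      rw [hsm] at hmul
      rw [sub_eq_iff_eq_add] at hmul
      rw [hmul, add_comm]
    rw [step1, qeq, Jtilde_decomp, JlinT_smul, JquadT_smul]
  have hdf := hderiv D hD
  rw [hfun] at hdf
  have hScont : Continuous S := by
    have hSalt : S = fun t => (1 + Qb * (C * P12)) * D *
        (∑ k ∈ Finset.range (Fintype.card (Fin pp)),
          (C * P12 * Kbar + t • (C * P12 * D)) ^ k) := by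
      funext t
      have hkt : Kbar + t • D ∈ 𝒦 := Submodule.add_mem _ hKbar (Submodule.smul_mem _ t hD)
      have nilt : IsNilpotent (C * P12 * (Kbar + t • D)) := nilswap _ hkt
      have ht : C * P12 * (Kbar + t • D) = C * P12 * Kbar + t • (C * P12 * D) := by
        simp only [Matrix.mul_add, Matrix.mul_smul]
      rw [ht] at nilt
      show (1 + Qb * (C * P12)) * D * (1 - C * P12 * (Kbar + t • D))⁻¹ = _
      rw [ht, inv_one_sub_eq_geom nilt]
    rw [hSalt]
    exact continuous_const.matrix_mul
      (continuous_finset_sum _ fun k _ => cont_pow_aff _ _ k)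
  have hφ : Continuous fun t => JlinT P11 P12 C Msq Swsq Rsq Svsq μ Qb (S t) :=
    continuous_JlinT_comp P11 P12 C Msq Swsq Rsq Svsq μ Qb hScont
  have hψ : Continuous fun t => JquadT P11 P12 C Msq Swsq Rsq Svsq μ (S t) :=
    continuous_JquadT_comp P11 P12 C Msq Swsq Rsq Svsq μ hScont
  rw [deriv_quad hφ hψ] at hdf
  have hS0 : S 0 = Δ := by
    rw [hSdef]
    show (1 + Qb * (C * P12)) * D * (1 - C * P12 * (Kbar + (0:ℝ) • D))⁻¹ = Δ
    rw [zero_smul, add_zero, ← hDfac]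
    calc (1 + Qb * (C * P12)) * ((1 - Kbar * (C * P12)) * Δ * (1 - C * P12 * Kbar))
          * (1 - C * P12 * Kbar)⁻¹
        = ((1 + Qb * (C * P12)) * (1 - Kbar * (C * P12)))
          * (Δ * ((1 - C * P12 * Kbar) * (1 - C * P12 * Kbar)⁻¹)) := by
          simp only [Matrix.mul_assoc]
      _ = Δ := by rw [hA, hL0, Matrix.one_mul, Matrix.mul_one]
  rw [hS0] at hdf
  have hq' : Qb + Δ = Q' := by rw [hΔdef]; abel
  have final1 : Jcost P11 P12 C Msq Swsq Rsq Svsq μ K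
      = Jtilde P11 P12 C Msq Swsq Rsq Svsq μ Q' := by
    rw [hQ'def]; exact Jcost_eq_Jtilde P11 P12 C Msq Swsq Rsq Svsq μ K nilK
  have final2 : Jcost P11 P12 C Msq Swsq Rsq Svsq μ Kbar
      = Jtilde P11 P12 C Msq Swsq Rsq Svsq μ Qb := by
    rw [hQbdef]; exact Jcost_eq_Jtilde P11 P12 C Msq Swsq Rsq Svsq μ Kbar nilKbar
  have dec := Jtilde_decomp P11 P12 C Msq Swsq Rsq Svsq μ Qb Δ
  rw [hq'] at dec
  have hquad := JquadT_nonneg P11 P12 C Msq Swsq Rsq Svsq μ Δ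
  rw [final1, final2, dec, hdf]
  linarith


/-- **strong QI implies unique stationarity.** If `𝒦 ⊆ ℝ^{mN×pN}` is a
strongly quadratically invariant subspace with respect to `G = C·P12` with `K·G` nilpotent
on `𝒦`, then the problem `min_{K ∈ 𝒦} J(K)` is uniquely stationary: every `Kbar ∈ 𝒦` whose
directional derivatives of `J` along `𝒦` all vanish (`∇J(Kbar) ∈ 𝒦^⊥`) is a global
minimizer of `J` over `𝒦`. -/
theorem strongQI_implies_uniquely_stationary {n m p N : ℕ}
    (hn : 0 < n) (hm : 0 < m) (hp : 0 < p) (hN : 0 < N)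
    (P11 : Matrix (Fin (n * (N + 1))) (Fin (n * (N + 1))) ℝ)
    (P12 : Matrix (Fin (n * (N + 1))) (Fin (m * N)) ℝ)
    (C : Matrix (Fin (p * N)) (Fin (n * (N + 1))) ℝ)
    {M W : Matrix (Fin (n * (N + 1))) (Fin (n * (N + 1))) ℝ}
    {R : Matrix (Fin (m * N)) (Fin (m * N)) ℝ}
    {V : Matrix (Fin (p * N)) (Fin (p * N)) ℝ}
    (hM : M.PosSemidef) (hW : W.PosSemidef) (hR : R.PosDef) (hV : V.PosDef)
    (μ : Fin (n * (N + 1)) → ℝ)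
    (G : Matrix (Fin (p * N)) (Fin (m * N)) ℝ) (hG : G = C * P12)
    (𝒦 : Submodule ℝ (Matrix (Fin (m * N)) (Fin (p * N)) ℝ))
    (hSQI : ∀ K₁ ∈ 𝒦, ∀ K₂ ∈ 𝒦, K₁ * G * K₂ ∈ 𝒦)
    (hnilp : ∀ K ∈ 𝒦, IsNilpotent (K * G)) :
    ∀ Kbar ∈ 𝒦,
      (∀ D ∈ 𝒦, deriv (fun t : ℝ =>
          Jcost P11 P12 C hM.sqrt hW.sqrt hR.posSemidef.sqrt hV.posSemidef.sqrt μ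
            (Kbar + t • D)) 0 = 0) →
      ∀ K ∈ 𝒦,
        Jcost P11 P12 C hM.sqrt hW.sqrt hR.posSemidef.sqrt hV.posSemidef.sqrt μ Kbar ≤
        Jcost P11 P12 C hM.sqrt hW.sqrt hR.posSemidef.sqrt hV.posSemidef.sqrt μ K := by
  subst hG
  intro Kbar hKbar hderiv K hK
  exact main_aux P11 P12 C hM.sqrt hW.sqrt hR.posSemidef.sqrt hV.posSemidef.sqrt μ 𝒦 hSQI hnilp
    Kbar hKbar hderiv K hK
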